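/- Let R_1, …, R_N : ℝ → ℝ be differentiable positive functions and suppose S, E, I_1, …, I_N : ℝ → ℝ are differentiable and satisfy the time-dependent SEIR system at time t. Then the function U(t) = E(t) + Σ_{i=1}^N (R_i(t)/Σ_{j=1}^N x_j R_j(t)) I_i(t) is differentiable at t with U'(t) = (S(t) − S*(t)) Σ_{i=1}^N γ_i R_i(t) I_i(t) + Σ_{i=1}^N (d/dt)(R_i(t)/Σ_{j=1}^N x_j R_j(t)) I_i(t), where S*(t) = (Σ_{j=1}^N x_j R_j(t))^{-1}. -/

import Mathlib

/-- derivative of the function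
`U = E + Σᵢ (Rᵢ/Σⱼ xⱼRⱼ) Iᵢ` along solutions of the time-dependent SEIR system
with differentiable positive basic reproduction numbers `Rᵢ(t)`. -/
theorem stmt_13
    (N : ℕ) [NeZero N]
    (σ : ℝ) (hσ : 0 < σ)
    (γ x : Fin N → ℝ)
    (hγ : ∀ i, 0 < γ i) (hx : ∀ i, 0 < x i)
    (hxsum : ∑ i, x i = 1)
    (R : Fin N → ℝ → ℝ)
    (hRdiff : ∀ i, Differentiable ℝ (R i))
    (hRpos : ∀ i t, 0 < R i t)
    (S E : ℝ → ℝ) (I : Fin N → ℝ → ℝ) (t : ℝ)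
    (hS : HasDerivAt S (-(∑ i, γ i * R i t * I i t) * S t) t)
    (hE : HasDerivAt E ((∑ i, γ i * R i t * I i t) * S t - σ * E t) t)
    (hI : ∀ i, HasDerivAt (I i) (x i * σ * E t - γ i * I i t) t) :
    HasDerivAt (fun s => E s + ∑ i, R i s / (∑ j, x j * R j s) * I i s)
      ((S t - (∑ j, x j * R j t)⁻¹) * (∑ i, γ i * R i t * I i t)
        + ∑ i, deriv (fun s => R i s / (∑ j, x j * R j s)) t * I i t) t := by
  have hNe : (Finset.univ : Finset (Fin N)).Nonempty :=
    Finset.univ_nonempty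
  have hD : ∀ s, (∑ j, x j * R j s) ≠ 0 := fun s =>
    (Finset.sum_pos (fun j _ => mul_pos (hx j) (hRpos j s)) hNe).ne'
  have hDdiff : Differentiable ℝ (fun s => ∑ j, x j * R j s) := by
    apply Differentiable.fun_sum
    intro j _
    exact (differentiable_const (x j)).mul (hRdiff j)
  have hc : ∀ i, DifferentiableAt ℝ (fun s => R i s / (∑ j, x j * R j s)) t :=
    fun i => ((hRdiff i).differentiableAt).div (hDdiff.differentiableAt) (hD t)
  have hci : ∀ i, HasDerivAt (fun s => R i s / (∑ j, x j * R j s))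
      (deriv (fun s => R i s / (∑ j, x j * R j s)) t) t :=
    fun i => (hc i).hasDerivAt
  have h1 : HasDerivAt (fun s => ∑ i, R i s / (∑ j, x j * R j s) * I i s)
      (∑ i, (deriv (fun s => R i s / (∑ j, x j * R j s)) t * I i t
        + R i t / (∑ j, x j * R j t) * (x i * σ * E t - γ i * I i t))) t :=
    HasDerivAt.fun_sum fun i _ => (hci i).mul (hI i)
  have h2 := hE.fun_add h1
  refine h2.congr_deriv ?_
  have key : ∑ i, (deriv (fun s => R i s / (∑ j, x j * R j s)) t * I i t
        + R i t / (∑ j, x j * R j t) * (x i * σ * E t - γ i * I i t))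
      = (∑ i, deriv (fun s => R i s / (∑ j, x j * R j s)) t * I i t)
        + σ * E t - (∑ j, x j * R j t)⁻¹ * (∑ i, γ i * R i t * I i t) := by
    rw [Finset.sum_add_distrib]
    have e1 : ∑ i, R i t / (∑ j, x j * R j t) * (x i * σ * E t - γ i * I i t)
        = σ * E t - (∑ j, x j * R j t)⁻¹ * (∑ i, γ i * R i t * I i t) := by
      rw [show σ * E t = (∑ i, x i * R i t) / (∑ j, x j * R j t) * (σ * E t) from by
        rw [div_self (hD t), one_mul]]
      rw [Finset.sum_div, Finset.sum_mul, Finset.mul_sum, ← Finset.sum_sub_distrib]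
      apply Finset.sum_congr rfl
      intro i _
      field_simp
    rw [e1]; ring
  rw [key]; ring
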